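/- arXiv:math/0405543 — 2 statements merged into one kernel-verified Lean document; each statement's English description precedes it below -/
import Mathlib

section
/- Conversely, if {P_n} is any sequence of F_q-linear polynomials of K-binomial type (P_i(st) = Σ (i choose n)_K P_n(t)(P_{i-n}(s))^{q^n}, deg P_i = q^i), then the operator δ_0 defined on the basis {P_n} by δ_0P_0 = 0, δ_0P_n = [n]P_{n-1}^q commutes with all multiplicative shifts ρ_λ, and δ = τ^{-1}δ_0 is a delta operator with basic sequence {P_n}. -/
noncomputable section

/-- `[i] = x^{q^i} - x`. -/
def brk {K : Type*} [CommRing K] (q : ℕ) (x : K) (i : ℕ) : K := x ^ q ^ i - x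

/-- Carlitz factorial: `D_0 = 1`, `D_i = [i] D_{i-1}^q`. -/
def Dfac {K : Type*} [CommRing K] (q : ℕ) (x : K) : ℕ → K
  | 0 => 1
  | i + 1 => brk q x (i + 1) * (Dfac q x i) ^ q

/-- The `K`-binomial coefficient `(i choose n)_K = D_i / (D_n D_{i-n}^{q^n})`. -/
def kBinom {K : Type*} [Field K] (q : ℕ) (x : K) (i n : ℕ) : K :=
  Dfac q x i / (Dfac q x n * (Dfac q x (i - n)) ^ q ^ n)

/-- The Frobenius `τ` on `F_q`-linear polynomials `Σ a_k t^{q^k}` (encoded as `ℕ →₀ L`). -/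
def frob {L : Type*} [CommRing L] (q : ℕ) (u : ℕ →₀ L) : ℕ →₀ L :=
  u.sum fun k a => Finsupp.single (k + 1) (a ^ q)

/-- Evaluation of the `F_q`-linear polynomial `Σ a_k t^{q^k}` at a point `t`. -/
def evp {L : Type*} [CommRing L] (q : ℕ) (u : ℕ →₀ L) (t : L) : L :=
  u.sum fun k a => a * t ^ q ^ k

/-- The multiplicative shift `(ρ_λ u)(t) = u(λ t)`. -/
def rho {K L : Type*} [Field K] [Field L] [Algebra K L] (q : ℕ) (lam : K) (u : ℕ →₀ L) :
    ℕ →₀ L :=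
  u.sum fun k a => Finsupp.single k ((algebraMap K L lam) ^ q ^ k * a)

section Lemmas

variable {K L : Type*} [Field K] [Field L] [Algebra K L] (q : ℕ)

lemma rho_apply (lam : K) (u : ℕ →₀ L) (j : ℕ) :
    rho q lam u j = (algebraMap K L lam) ^ q ^ j * u j := by
  classical
  rw [rho, Finsupp.sum_apply, Finsupp.sum_eq_single j]
  · rw [Finsupp.single_eq_same]
  · intro b _ hbj
    exact Finsupp.single_eq_of_ne' hbj
  · intro _
    simp

lemma frob_apply_succ (u : ℕ →₀ L) (j : ℕ) (hq : q ≠ 0) :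
    frob q u (j + 1) = (u j) ^ q := by
  classical
  rw [frob, Finsupp.sum_apply, Finsupp.sum_eq_single j]
  · rw [Finsupp.single_eq_same]
  · intro b _ hbj
    exact Finsupp.single_eq_of_ne (by omega)
  · intro _
    simp [zero_pow hq]

lemma frob_apply_zero (u : ℕ →₀ L) : frob q u 0 = 0 := by
  classical
  rw [frob, Finsupp.sum_apply, Finsupp.sum]
  apply Finset.sum_eq_zero
  intro k _
  exact Finsupp.single_eq_of_ne (by omega)

end Lemmas

section Lemmas2

variable {K L : Type*} [Field K] [Field L] [Algebra K L] (q : ℕ)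

lemma rho_add (lam : K) (u v : ℕ →₀ L) :
    rho q lam (u + v) = rho q lam u + rho q lam v := by
  ext j; simp [rho_apply, mul_add]

lemma rho_smul (lam : K) (c : L) (u : ℕ →₀ L) :
    rho q lam (c • u) = c • rho q lam u := by
  ext j; simp [rho_apply]; ring

lemma rho_zero (lam : K) : rho q lam (0 : ℕ →₀ L) = 0 := by
  ext j; simp [rho_apply]

lemma rho_single (lam : K) (j : ℕ) (a : L) :
    rho q lam (Finsupp.single j a) = Finsupp.single j ((algebraMap K L lam) ^ q ^ j * a) := by
  ext k; rw [rho_apply]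
  rcases eq_or_ne k j with rfl | h
  · simp
  · simp [Finsupp.single_eq_of_ne' (Ne.symm h)]

lemma rho_finset_sum (lam : K) (s : Finset ℕ) (f : ℕ → (ℕ →₀ L)) :
    rho q lam (∑ i ∈ s, f i) = ∑ i ∈ s, rho q lam (f i) := by
  ext j
  rw [rho_apply, Finsupp.finset_sum_apply, Finsupp.finset_sum_apply, Finset.mul_sum]
  exact Finset.sum_congr rfl fun i _ => (rho_apply q lam (f i) j).symm

lemma frob_smul (c : L) (u : ℕ →₀ L) (hq : q ≠ 0) :
    frob q (c • u) = (c ^ q) • frob q u := by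
  ext j
  cases j with
  | zero => simp [frob_apply_zero]
  | succ k => simp [frob_apply_succ _ _ _ hq, mul_pow]

lemma rho_frob (lam : K) (u : ℕ →₀ L) (hq : q ≠ 0) :
    rho q lam (frob q u) = frob q (rho q lam u) := by
  ext j
  cases j with
  | zero => simp [rho_apply, frob_apply_zero]
  | succ k =>
      rw [rho_apply, frob_apply_succ _ _ _ hq, frob_apply_succ _ _ _ hq, rho_apply, mul_pow,
        ← pow_mul, ← pow_succ]

end Lemmas2

section Lemmas3

variable {K L : Type*} [Field K] [Field L] [Algebra K L] (q : ℕ)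

lemma frob_finset_sum (hq : q ≠ 0) (hfq : ∀ a b : L, (a + b) ^ q = a ^ q + b ^ q)
    (s : Finset ℕ) (f : ℕ → (ℕ →₀ L)) :
    frob q (∑ i ∈ s, f i) = ∑ i ∈ s, frob q (f i) := by
  classical
  induction s using Finset.induction_on with
  | empty =>
      ext j
      cases j with
      | zero => simp [frob_apply_zero]
      | succ k => simp [frob_apply_succ _ _ _ hq, zero_pow hq]
  | insert _ _ hx ih =>
      rw [Finset.sum_insert hx, Finset.sum_insert hx, ← ih]
      ext j
      cases j with
      | zero => simp [frob_apply_zero]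
      | succ k => simp [frob_apply_succ _ _ _ hq, hfq]

lemma evp_eq_linearCombination (u : ℕ →₀ L) (t : L) :
    evp q u t = Finsupp.linearCombination L (fun k => t ^ q ^ k) u := by
  rw [evp, Finsupp.linearCombination_apply]
  exact Finsupp.sum_congr fun k _ => (smul_eq_mul _ _).symm

lemma evp_add (u v : ℕ →₀ L) (t : L) : evp q (u + v) t = evp q u t + evp q v t := by
  simp [evp_eq_linearCombination]

lemma evp_smul (c : L) (u : ℕ →₀ L) (t : L) : evp q (c • u) t = c * evp q u t := by
  simp [evp_eq_linearCombination]

lemma evp_sub (u v : ℕ →₀ L) (t : L) : evp q (u - v) t = evp q u t - evp q v t := by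
  simp [evp_eq_linearCombination]

lemma evp_finset_sum (s : Finset ℕ) (f : ℕ → (ℕ →₀ L)) (t : L) :
    evp q (∑ i ∈ s, f i) t = ∑ i ∈ s, evp q (f i) t := by
  simp [evp_eq_linearCombination]

lemma evp_rho (lam : K) (u : ℕ →₀ L) (t : L) :
    evp q (rho q lam u) t = evp q u (algebraMap K L lam * t) := by
  classical
  rw [evp, evp, rho]
  rw [Finsupp.sum_sum_index]
  · apply Finsupp.sum_congr
    intro k _
    rw [Finsupp.sum_single_index (by simp)]
    rw [mul_pow]; ring
  · intro k; simp
  · intro k a b; simp [add_mul]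

end Lemmas3

section Lemmas4

variable {K L : Type*} [Field K] [Field L] [Algebra K L] (q : ℕ)

lemma evp_zero_of_forall_eval (hq2 : 2 ≤ q) [Infinite K] (u : ℕ →₀ L)
    (h : ∀ s : K, evp q u (algebraMap K L s) = 0) : u = 0 := by
  classical
  set p : Polynomial L := ∑ k ∈ u.support, Polynomial.C (u k) * Polynomial.X ^ q ^ k with hp
  have heval : ∀ t : L, p.eval t = evp q u t := by
    intro t
    rw [hp, Polynomial.eval_finset_sum, evp, Finsupp.sum]
    exact Finset.sum_congr rfl fun k _ => by simp
  have hp0 : p = 0 := by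
    apply Polynomial.eq_zero_of_infinite_isRoot
    apply Set.infinite_of_injective_forall_mem
      (f := fun n : ℕ => algebraMap K L (Infinite.natEmbedding K n))
    · intro a b hab
      exact (Infinite.natEmbedding K).injective ((algebraMap K L).injective hab)
    · intro n
      simp only [Set.mem_setOf_eq, Polynomial.IsRoot, heval]
      exact h _
  ext j
  have : p.coeff (q ^ j) = u j := by
    rw [hp, Polynomial.finset_sum_coeff]
    rw [Finset.sum_eq_single j]
    · simp
    · intro b _ hbj
      have hne : q ^ b ≠ q ^ j := fun hc => hbj (Nat.pow_right_injective hq2 hc)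
      simp only [Polynomial.coeff_C_mul, Polynomial.coeff_X_pow, if_neg (Ne.symm hne), mul_zero]
    · intro hj
      simp [Finsupp.notMem_support_iff.mp hj]
  rw [← this, hp0]
  simp

end Lemmas4

section KeyIdentity

variable {K : Type*} [Field K] (q : ℕ) (x : K)

lemma Dfac_ne_zero (hbrk : ∀ n : ℕ, 1 ≤ n → brk q x n ≠ 0) :
    ∀ n : ℕ, Dfac q x n ≠ 0 := by
  intro n
  induction n with
  | zero => simp [Dfac]
  | succ m ih =>
      rw [Dfac]
      exact mul_ne_zero (hbrk (m + 1) (by omega)) (pow_ne_zero _ ih)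

lemma binom_key (hbrk : ∀ n : ℕ, 1 ≤ n → brk q x n ≠ 0) (j m : ℕ) (hm : m ≤ j) :
    brk q x (m + 1) * kBinom q x (j + 1) (m + 1)
      = brk q x (j + 1) * (kBinom q x j m) ^ q := by
  have hD := Dfac_ne_zero q x hbrk
  have hsub : j + 1 - (m + 1) = j - m := by omega
  rw [kBinom, kBinom, hsub]
  rw [show Dfac q x (j + 1) = brk q x (j + 1) * (Dfac q x j) ^ q from rfl,
    show Dfac q x (m + 1) = brk q x (m + 1) * (Dfac q x m) ^ q from rfl]
  rw [pow_succ]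
  have h1 : brk q x (m + 1) ≠ 0 := hbrk _ (by omega)
  have h2 : brk q x (j + 1) ≠ 0 := hbrk _ (by omega)
  have h3 : Dfac q x m ≠ 0 := hD m
  have h4 : Dfac q x j ≠ 0 := hD j
  have h5 : Dfac q x (j - m) ≠ 0 := hD (j - m)
  field_simp
  rw [div_pow, mul_pow, ← pow_mul, mul_div_assoc',
    eq_div_iff (mul_ne_zero (pow_ne_zero _ h3) (pow_ne_zero _ h5))]
  ring
end KeyIdentity

section LaurentLemmas

variable (F : Type*) [Field F]

lemma xls_pow (m : ℕ) :
    (HahnSeries.single (1 : ℤ) (1 : F) : LaurentSeries F) ^ m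
      = HahnSeries.single (m : ℤ) (1 : F) := by
  rw [HahnSeries.single_pow, one_pow, nsmul_eq_mul, mul_one]

lemma xls_pow_ne {m n : ℕ} (h : m ≠ n) :
    (HahnSeries.single (1 : ℤ) (1 : F) : LaurentSeries F) ^ m
      ≠ (HahnSeries.single (1 : ℤ) (1 : F) : LaurentSeries F) ^ n := by
  rw [xls_pow, xls_pow]
  intro hc
  have h1 : (HahnSeries.single (m : ℤ) (1 : F) : LaurentSeries F).coeff (m : ℤ) = 1 :=
    HahnSeries.coeff_single_same _ _
  rw [hc] at h1
  rw [HahnSeries.coeff_single_of_ne (by exact_mod_cast h)] at h1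
  exact one_ne_zero h1.symm

lemma brk_xls_ne_zero (q : ℕ) (hq2 : 2 ≤ q) (n : ℕ) (hn : 1 ≤ n) :
    brk q (HahnSeries.single (1 : ℤ) (1 : F) : LaurentSeries F) n ≠ 0 := by
  rw [brk, sub_ne_zero]
  have : q ^ n ≠ 1 := by
    have : 1 < q ^ n := Nat.one_lt_pow (by omega) (by omega)
    omega
  simpa using xls_pow_ne F this

instance : Infinite (LaurentSeries F) :=
  Infinite.of_injective (fun n : ℕ => (HahnSeries.single (1 : ℤ) (1 : F) : LaurentSeries F) ^ n)
    (fun a b hab => by by_contra h; exact xls_pow_ne F h hab)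

end LaurentLemmas

section Expand

variable {F L : Type*} [Field F] [Field L] [Algebra (LaurentSeries F) L] (q : ℕ)

lemma rho_P_expand (hq2 : 2 ≤ q) (P : ℕ → (ℕ →₀ L))
    (hbinom : ∀ (i : ℕ) (s t : LaurentSeries F),
      evp q (P i) (algebraMap (LaurentSeries F) L (s * t))
        = ∑ n ∈ Finset.range (i + 1),
            algebraMap (LaurentSeries F) L
                (kBinom q (HahnSeries.single (1 : ℤ) (1 : F)) i n)
              * evp q (P n) (algebraMap (LaurentSeries F) L t)
              * (evp q (P (i - n)) (algebraMap (LaurentSeries F) L s)) ^ q ^ n)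
    (i : ℕ) (lam : LaurentSeries F) :
    rho q lam (P i)
      = ∑ n ∈ Finset.range (i + 1),
          (algebraMap (LaurentSeries F) L
              (kBinom q (HahnSeries.single (1 : ℤ) (1 : F)) i n)
            * (evp q (P (i - n)) (algebraMap (LaurentSeries F) L lam)) ^ q ^ n) • P n := by
  set ι := algebraMap (LaurentSeries F) L
  rw [← sub_eq_zero]
  apply evp_zero_of_forall_eval (K := LaurentSeries F) q hq2
  intro s
  rw [evp_sub, sub_eq_zero, evp_rho, ← map_mul, hbinom i lam s, evp_finset_sum]
  apply Finset.sum_congr rfl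
  intro n _
  rw [evp_smul]
  ring

end Expand

section CommP

variable {F L : Type*} [Field F] [Field L] [Algebra (LaurentSeries F) L] (q : ℕ)

lemma comm_on_P (hq2 : 2 ≤ q)
    (hfq : ∀ a b : L, (a + b) ^ q = a ^ q + b ^ q)
    (P : ℕ → (ℕ →₀ L))
    (hbinom : ∀ (i : ℕ) (s t : LaurentSeries F),
      evp q (P i) (algebraMap (LaurentSeries F) L (s * t))
        = ∑ n ∈ Finset.range (i + 1),
            algebraMap (LaurentSeries F) L
                (kBinom q (HahnSeries.single (1 : ℤ) (1 : F)) i n)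
              * evp q (P n) (algebraMap (LaurentSeries F) L t)
              * (evp q (P (i - n)) (algebraMap (LaurentSeries F) L s)) ^ q ^ n)
    (δ₀ : (ℕ →₀ L) →ₗ[L] (ℕ →₀ L))
    (hδ₀P0 : δ₀ (P 0) = 0)
    (hδ₀P : ∀ n, 1 ≤ n →
      δ₀ (P n)
        = algebraMap (LaurentSeries F) L
            (brk q (HahnSeries.single (1 : ℤ) (1 : F)) n) • frob q (P (n - 1)))
    (i : ℕ) (lam : LaurentSeries F) :
    δ₀ (rho q lam (P i)) = rho q lam (δ₀ (P i)) := by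
  have hq0 : q ≠ 0 := by omega
  set x : LaurentSeries F := HahnSeries.single (1 : ℤ) (1 : F) with hx
  set ι := algebraMap (LaurentSeries F) L with hι
  have hbrk : ∀ n : ℕ, 1 ≤ n → brk q x n ≠ 0 := brk_xls_ne_zero F q hq2
  have hexp := rho_P_expand q hq2 P hbinom
  cases i with
  | zero =>
      rw [hδ₀P0, rho_zero, hexp 0 lam, map_sum]
      rw [Finset.sum_range_one, map_smul, hδ₀P0, smul_zero]
  | succ j =>
      rw [hexp (j + 1) lam, map_sum, Finset.sum_range_succ']
      rw [map_smul, hδ₀P0, smul_zero, add_zero]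
      rw [hδ₀P (j + 1) (by omega)]
      simp only [Nat.add_sub_cancel]
      rw [rho_smul, rho_frob _ _ _ hq0, hexp j lam,
        frob_finset_sum q hq0 hfq, Finset.smul_sum]
      apply Finset.sum_congr rfl
      intro m hm
      have hmj : m ≤ j := by
        simpa using Nat.lt_succ_iff.mp (Finset.mem_range.mp hm)
      rw [map_smul, hδ₀P (m + 1) (by omega)]
      simp only [Nat.add_sub_cancel, Nat.succ_sub_succ]
      rw [frob_smul _ _ _ hq0, smul_smul, smul_smul]
      congr 1
      have key : ι (brk q x (m + 1)) * ι (kBinom q x (j + 1) (m + 1))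
          = ι (brk q x (j + 1)) * (ι (kBinom q x j m)) ^ q := by
        rw [← map_mul, ← map_pow, ← map_mul, binom_key q x hbrk j m hmj]
      set E : L := evp q (P (j - m)) (ι lam) with hE
      rw [mul_pow, ← pow_mul, ← pow_succ]
      linear_combination E ^ q ^ (m + 1) * key

end CommP

/-- Converse part of Theorem 1: if `{P_n}` is a sequence of `F_q`-linear polynomials of
`K`-binomial type (with `deg P_i = q^i`) and `δ₀` is the linear operator defined on the basis
`{P_n}` by `δ₀P_0 = 0`, `δ₀P_n = [n]P_{n-1}^q`, then `δ₀` commutes with all multiplicative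
shifts `ρ_λ`, and `δ = τ⁻¹δ₀` is a delta operator (i.e. `δ₀(t^{q^n}) = c_n t^{q^n}` with
`c_0 = 0` and `c_n ≠ 0` for `n ≥ 1`) whose basic sequence is `{P_n}`. -/
theorem K_binomial_gives_delta_operator {F L : Type*} [Field F] [Fintype F] [Field L]
    [Algebra (LaurentSeries F) L]
    (q : ℕ) (hq : q = Fintype.card F)
    (P : ℕ → (ℕ →₀ L))
    (hPdeg : ∀ n : ℕ, P n n ≠ 0 ∧ ∀ k, n < k → P n k = 0)
    (hbinom : ∀ (i : ℕ) (s t : LaurentSeries F),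
      evp q (P i) (algebraMap (LaurentSeries F) L (s * t))
        = ∑ n ∈ Finset.range (i + 1),
            algebraMap (LaurentSeries F) L
                (kBinom q (HahnSeries.single (1 : ℤ) (1 : F)) i n)
              * evp q (P n) (algebraMap (LaurentSeries F) L t)
              * (evp q (P (i - n)) (algebraMap (LaurentSeries F) L s)) ^ q ^ n)
    (δ₀ : (ℕ →₀ L) →ₗ[L] (ℕ →₀ L))
    (hδ₀P0 : δ₀ (P 0) = 0)
    (hδ₀P : ∀ n, 1 ≤ n →
      δ₀ (P n)
        = algebraMap (LaurentSeries F) L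
            (brk q (HahnSeries.single (1 : ℤ) (1 : F)) n) • frob q (P (n - 1))) :
    (∀ (lam : LaurentSeries F) (u : ℕ →₀ L), δ₀ (rho q lam u) = rho q lam (δ₀ u))
    ∧ ∃ c : ℕ → L, c 0 = 0 ∧ (∀ n, 1 ≤ n → c n ≠ 0)
        ∧ ∀ n : ℕ, δ₀ (Finsupp.single n 1) = c n • Finsupp.single n 1 := by
  classical
  have hq2 : 2 ≤ q := by rw [hq]; exact Fintype.one_lt_card
  have hq0 : q ≠ 0 := by omega
  set x : LaurentSeries F := HahnSeries.single (1 : ℤ) (1 : F) with hx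
  set ι := algebraMap (LaurentSeries F) L with hι
  have hιinj : Function.Injective ι := (algebraMap (LaurentSeries F) L).injective
  -- characteristic
  haveI hfact : Fact (ringChar F).Prime := ⟨CharP.char_is_prime F (ringChar F)⟩
  haveI hchL : CharP L (ringChar F) := by
    have h1 : Function.Injective
        ((algebraMap (LaurentSeries F) L).comp (HahnSeries.C : F →+* LaurentSeries F)) :=
      ((algebraMap (LaurentSeries F) L).comp (HahnSeries.C : F →+* LaurentSeries F)).injective
    exact charP_of_injective_ringHom h1 (ringChar F)
  obtain ⟨nn, hpn, hcard⟩ := FiniteField.card F (ringChar F)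
  have hfq : ∀ a b : L, (a + b) ^ q = a ^ q + b ^ q := by
    intro a b
    rw [hq, hcard]
    exact add_pow_char_pow (R := L) a b _ _
  -- commuting on the basis
  have hcommP := comm_on_P q hq2 hfq P hbinom δ₀ hδ₀P0 hδ₀P
  -- representation of P n in terms of singles
  have hrep : ∀ n, P n = ∑ k ∈ Finset.range (n + 1), Finsupp.single k (P n k) := by
    intro n
    ext j
    rw [Finsupp.finset_sum_apply]
    rcases le_or_gt j n with h | h
    · rw [Finset.sum_eq_single_of_mem j (Finset.mem_range.mpr (by omega))
        (fun b _ hbj => Finsupp.single_eq_of_ne' hbj), Finsupp.single_eq_same]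
    · rw [(hPdeg n).2 j h]
      refine (Finset.sum_eq_zero ?_).symm
      intro k hk
      exact Finsupp.single_eq_of_ne (by have := Finset.mem_range.mp hk; omega)
  -- spanning
  set S : Submodule L (ℕ →₀ L) := Submodule.span L (Set.range P) with hS
  have hsingle : ∀ n, Finsupp.single n (1 : L) ∈ S := by
    intro n
    induction n using Nat.strong_induction_on with
    | _ n ih =>
      have h2 : (∑ k ∈ Finset.range n, Finsupp.single k (P n k)) ∈ S := by
        apply Submodule.sum_mem
        intro k hk
        have h3 : Finsupp.single k (P n k) = (P n k) • Finsupp.single k (1 : L) := by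
          rw [Finsupp.smul_single, smul_eq_mul, mul_one]
        rw [h3]
        exact Submodule.smul_mem _ _ (ih k (Finset.mem_range.mp hk))
      have h4' := hrep n
      rw [Finset.sum_range_succ] at h4'
      have h4 : Finsupp.single n (P n n)
          = P n - ∑ k ∈ Finset.range n, Finsupp.single k (P n k) :=
        eq_sub_of_add_eq' h4'.symm
      have h1 : Finsupp.single n (P n n) ∈ S := by
        rw [h4]
        exact Submodule.sub_mem _ (Submodule.subset_span ⟨n, rfl⟩) h2
      have h5 : Finsupp.single n (1 : L) = (P n n)⁻¹ • Finsupp.single n (P n n) := by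
        rw [Finsupp.smul_single, smul_eq_mul, inv_mul_cancel₀ (hPdeg n).1]
      rw [h5]
      exact Submodule.smul_mem _ _ h1
  have hall : ∀ u : ℕ →₀ L, u ∈ S := by
    intro u
    induction u using Finsupp.induction with
    | zero => exact zero_mem S
    | single_add a b f _ _ ih =>
        apply add_mem _ ih
        have h3 : Finsupp.single a b = b • Finsupp.single a (1 : L) := by
          rw [Finsupp.smul_single, smul_eq_mul, mul_one]
        rw [h3]
        exact Submodule.smul_mem _ _ (hsingle a)
  -- commuting in general
  have hcomm : ∀ (lam : LaurentSeries F) (u : ℕ →₀ L),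
      δ₀ (rho q lam u) = rho q lam (δ₀ u) := by
    intro lam u
    induction hall u using Submodule.span_induction with
    | mem w hw => obtain ⟨i, rfl⟩ := hw; exact hcommP i lam
    | zero => rw [rho_zero, map_zero, rho_zero]
    | add w v _ _ ihw ihv => rw [rho_add, map_add, map_add, ihw, ihv, rho_add]
    | smul a w _ ihw => rw [rho_smul, map_smul, map_smul, ihw, rho_smul]
  refine ⟨hcomm, ?_⟩
  -- the eigenvalue function
  have hxq : ∀ a b : ℕ, a ≠ b → (ι x) ^ q ^ a ≠ (ι x) ^ q ^ b := by
    intro a b hab hc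
    rw [← map_pow ι, ← map_pow ι] at hc
    exact xls_pow_ne F (fun h => hab (Nat.pow_right_injective hq2 h)) (hιinj hc)
  set c : ℕ → L := fun n => (δ₀ (Finsupp.single n 1)) n with hc
  have heig : ∀ n : ℕ, δ₀ (Finsupp.single n 1) = c n • Finsupp.single n 1 := by
    intro n
    set v := δ₀ (Finsupp.single n (1 : L)) with hv
    have h1 : δ₀ (rho q x (Finsupp.single n 1)) = rho q x v := hcomm x (Finsupp.single n 1)
    rw [rho_single] at h1
    have h2 : Finsupp.single n ((ι x) ^ q ^ n * 1) = ((ι x) ^ q ^ n) • Finsupp.single n (1 : L) := by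
      rw [Finsupp.smul_single, smul_eq_mul]
    rw [h2, map_smul, ← hv] at h1
    have hco : ∀ k, k ≠ n → v k = 0 := by
      intro k hk
      have h3 := congrArg (fun w : ℕ →₀ L => w k) h1
      simp only [Finsupp.smul_apply, smul_eq_mul, rho_apply] at h3
      by_contra hvk
      exact hxq n k (Ne.symm hk) (mul_right_cancel₀ hvk h3)
    ext j
    rcases eq_or_ne j n with rfl | hj
    · rw [Finsupp.smul_apply, Finsupp.single_eq_same, smul_eq_mul, mul_one]
    · rw [hco j hj, Finsupp.smul_apply, Finsupp.single_eq_of_ne' (Ne.symm hj), smul_zero]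
  have hc0 : c 0 = 0 := by
    have hP0 : P 0 = Finsupp.single 0 (P 0 0) := by
      ext j
      cases j with
      | zero => rw [Finsupp.single_eq_same]
      | succ k =>
          rw [(hPdeg 0).2 (k + 1) (by omega), Finsupp.single_eq_of_ne (by omega)]
    have h6 : Finsupp.single 0 (1 : L) = ((P 0) 0)⁻¹ • Finsupp.single 0 ((P 0) 0) := by
      rw [Finsupp.smul_single, smul_eq_mul, inv_mul_cancel₀ (hPdeg 0).1]
    have h7 : δ₀ (Finsupp.single 0 (1 : L)) = 0 := by
      rw [h6, ← hP0, map_smul, hδ₀P0, smul_zero]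
    rw [hc]
    simp [h7]
  refine ⟨c, hc0, ?_, heig⟩
  intro n hn
  obtain ⟨m, rfl⟩ : ∃ m, n = m + 1 := ⟨n - 1, by omega⟩
  have hA : δ₀ (P (m + 1)) (m + 1) = P (m + 1) (m + 1) * c (m + 1) := by
    have h8 : δ₀ (P (m + 1))
        = ∑ k ∈ Finset.range (m + 2), Finsupp.single k (P (m + 1) k * c k) := by
      conv_lhs => rw [hrep (m + 1)]
      rw [map_sum]
      apply Finset.sum_congr rfl
      intro k _
      have h9 : Finsupp.single k (P (m + 1) k) = (P (m + 1) k) • Finsupp.single k (1 : L) := by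
        rw [Finsupp.smul_single, smul_eq_mul, mul_one]
      rw [h9, map_smul, heig k, smul_smul, Finsupp.smul_single, smul_eq_mul, mul_one]
    rw [h8, Finsupp.finset_sum_apply,
      Finset.sum_eq_single_of_mem (m + 1) (Finset.mem_range.mpr (by omega))
        (fun b _ hb => Finsupp.single_eq_of_ne' hb), Finsupp.single_eq_same]
  have hB : δ₀ (P (m + 1)) (m + 1) = ι (brk q x (m + 1)) * (P m m) ^ q := by
    rw [hδ₀P (m + 1) (by omega), Nat.add_sub_cancel, Finsupp.smul_apply, smul_eq_mul,
      frob_apply_succ _ _ _ hq0]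
  have hne : P (m + 1) (m + 1) * c (m + 1) ≠ 0 := by
    rw [← hA, hB]
    refine mul_ne_zero ?_ (pow_ne_zero _ (hPdeg m).1)
    intro h
    exact brk_xls_ne_zero F q hq2 (m + 1) (by omega) (hιinj (by rw [h, map_zero]))
  exact fun hcz => hne (by rw [hcz, mul_zero])
end
end

section
/- For the delta operator θ = τ^{-1}θ_0 with θ_0 = Σ_{l≥1} (-1)^{l+1}/L_l · Δ^{(l)}, one has θ_0(t^{q^j}) = t^{q^j} for all j ≥ 1, and its basic sequence is P_0(t) = t, P_n(t) = D_n(t^{q^n} - t^{q^{n-1}}) for n ≥ 1. -/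
noncomputable section

/-- `L_0 = 1`, `L_i = [i] L_{i-1}`. -/
def Lfac {K : Type*} [CommRing K] (q : ℕ) (x : K) : ℕ → K
  | 0 => 1
  | i + 1 => brk q x (i + 1) * Lfac q x i

/-- The local parameter `x ∈ K = F_q((x))`. -/
def xK (F : Type*) [Field F] : LaurentSeries F := HahnSeries.single (1 : ℤ) 1

/-- The iterated Carlitz difference operators `Δ^{(l)}` on `F_q`-linear polynomials
(encoded as `ℕ →₀ K`). -/
def DeltaIter {F : Type*} [Field F] (q : ℕ) :
    ℕ → (ℕ →₀ LaurentSeries F) → (ℕ →₀ LaurentSeries F)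
  | 0, u => u
  | l + 1, u =>
      ((DeltaIter q l u).sum fun k a => Finsupp.single k (xK F ^ q ^ k * a))
        - xK F ^ q ^ l • DeltaIter q l u

/-- The operator `θ₀ = Σ_{l≥1} ((-1)^{l+1}/L_l) Δ^{(l)}` (the series is finite on each
monomial `t^{q^j}` since `Δ^{(l)}(t^{q^j}) = 0` for `l > j`). -/
def theta0 {F : Type*} [Field F] (q : ℕ) (u : ℕ →₀ LaurentSeries F) :
    ℕ →₀ LaurentSeries F :=
  u.sum fun j a =>
    a • ∑ l ∈ Finset.Icc 1 j,
      ((-1 : LaurentSeries F) ^ (l + 1) / Lfac q (xK F) l) •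
        DeltaIter q l (Finsupp.single j (1 : LaurentSeries F))

/-- Evaluation at `t = 1`. -/
def eval1 {L : Type*} [CommRing L] (u : ℕ →₀ L) : L :=
  u.sum fun _ a => a

/-- The basic sequence of `θ = τ^{-1}θ₀`: `P_0(t) = t`, `P_n(t) = D_n(t^{q^n} - t^{q^{n-1}})`. -/
def Pseq {F : Type*} [Field F] (q : ℕ) (n : ℕ) : ℕ →₀ LaurentSeries F :=
  if n = 0 then Finsupp.single 0 1
  else Dfac q (xK F) n •
    (Finsupp.single n (1 : LaurentSeries F) - Finsupp.single (n - 1) (1 : LaurentSeries F))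

/-! ### Auxiliary lemmas -/

section Aux

variable {F : Type*} [Field F]

lemma xK_pow (m : ℕ) : (xK F) ^ m = HahnSeries.single (m : ℤ) (1 : F) := by
  rw [xK, HahnSeries.single_pow]; simp

lemma xK_pow_ne {m m' : ℕ} (h : m ≠ m') : (xK F) ^ m ≠ (xK F) ^ m' := by
  rw [xK_pow, xK_pow]
  intro hc
  have h2 := congrArg (fun u : LaurentSeries F => u.coeff (m : ℤ)) hc
  rw [HahnSeries.coeff_single_same,
    HahnSeries.coeff_single_of_ne (by exact_mod_cast h)] at h2
  exact one_ne_zero h2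

lemma brk_ne_zero {q : ℕ} (hq2 : 2 ≤ q) {i : ℕ} (hi : 1 ≤ i) :
    brk q (xK F) i ≠ 0 := by
  have h1 : q ^ i ≠ 1 := by
    have h2 : q ^ 1 ≤ q ^ i := Nat.pow_le_pow_right (by omega) hi
    rw [pow_one] at h2
    omega
  have h2 := xK_pow_ne (F := F) (m := q ^ i) (m' := 1) h1
  rw [pow_one] at h2
  rw [brk]
  exact sub_ne_zero.mpr h2

lemma Dfac_ne_zero_s17 {q : ℕ} (hq2 : 2 ≤ q) (i : ℕ) : Dfac q (xK F) i ≠ 0 := by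
  induction i with
  | zero => simp [Dfac]
  | succ i ih =>
      rw [Dfac]
      exact mul_ne_zero (brk_ne_zero hq2 (by omega)) (pow_ne_zero _ ih)

lemma Lfac_ne_zero {q : ℕ} (hq2 : 2 ≤ q) (i : ℕ) : Lfac q (xK F) i ≠ 0 := by
  induction i with
  | zero => simp [Lfac]
  | succ i ih =>
      rw [Lfac]
      exact mul_ne_zero (brk_ne_zero hq2 (by omega)) ih

variable [Fintype F]

lemma qpow_sub {q : ℕ} (hq : q = Fintype.card F) (a b : LaurentSeries F) (n : ℕ) :
    (a - b) ^ q ^ n = a ^ q ^ n - b ^ q ^ n := by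
  haveI : CharP (LaurentSeries F) (ringChar F) :=
    charP_of_injective_ringHom (HahnSeries.C_injective (Γ := ℤ) (R := F)) _
  obtain ⟨m, hp, hcard⟩ := FiniteField.card F (ringChar F)
  haveI : Fact (Nat.Prime (ringChar F)) := ⟨hp⟩
  rw [hq, hcard, ← pow_mul]
  exact sub_pow_char_pow a b _

/-- `(brk (j-l))^{q^l} = x^{q^j} - x^{q^l}` for `l ≤ j`. -/
lemma brk_pow {q : ℕ} (hq : q = Fintype.card F) {l j : ℕ} (hlj : l ≤ j) :
    (brk q (xK F) (j - l)) ^ q ^ l = (xK F) ^ q ^ j - (xK F) ^ q ^ l := by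
  rw [brk, qpow_sub hq, ← pow_mul, ← pow_add, Nat.sub_add_cancel hlj]

/-- The product `∏_{i<l} (x^{q^j} - x^{q^i})`. -/
def prD (q j l : ℕ) : LaurentSeries F :=
  ∏ i ∈ Finset.range l, ((xK F) ^ q ^ j - (xK F) ^ q ^ i)

lemma DeltaIter_single (q l j : ℕ) (c : LaurentSeries F) :
    DeltaIter q l (Finsupp.single j c) = Finsupp.single j (prD q j l * c) := by
  induction l with
  | zero => simp [DeltaIter, prD]
  | succ l ih =>
      rw [DeltaIter, ih, Finsupp.sum_single_index (by simp), Finsupp.smul_single,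
        ← Finsupp.single_sub]
      congr 1
      rw [smul_eq_mul, prD, prD, Finset.prod_range_succ]
      ring

lemma prD_mul_Dfac {q : ℕ} (hq : q = Fintype.card F) {j l : ℕ} (hlj : l ≤ j) :
    prD (F := F) q j l * (Dfac q (xK F) (j - l)) ^ q ^ l = Dfac q (xK F) j := by
  induction l with
  | zero => simp [prD]
  | succ l ih =>
      have hl : l ≤ j := by omega
      have hsub : j - l = (j - (l + 1)) + 1 := by omega
      have hD : Dfac q (xK F) (j - l)
          = brk q (xK F) (j - l) * (Dfac q (xK F) (j - (l + 1))) ^ q := by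
        rw [hsub]; rfl
      rw [← ih hl, hD, mul_pow, brk_pow hq hl, ← pow_mul, ← pow_succ']
      rw [prD, prD, Finset.prod_range_succ]
      ring

/-- Gekeler's identity, telescoped form: `∑_{l=0}^{j} (-1)^l/(L_l D_{j-l}^{q^l}) = 0` for
`j ≥ 1`. -/
lemma T_zero {q : ℕ} (hq : q = Fintype.card F) {j : ℕ} (hj : 1 ≤ j) :
    ∑ l ∈ Finset.range (j + 1),
      ((-1 : LaurentSeries F) ^ l / Lfac q (xK F) l)
        * (1 / Dfac q (xK F) (j - l)) ^ q ^ l = 0 := by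
  have hq2 : 2 ≤ q := by rw [hq]; exact Fintype.one_lt_card
  set x := xK F with hx
  have hbrkj : brk q x j ≠ 0 := brk_ne_zero hq2 hj
  set A : ℕ → LaurentSeries F := fun l =>
    ((-1) ^ l / Lfac q x l) * ((1 / Dfac q x (j - l)) * brk q x (j - l)) ^ q ^ l with hA
  set B : ℕ → LaurentSeries F := fun l =>
    ((-1) ^ l / Lfac q x l * brk q x l) * (1 / Dfac q x (j - l)) ^ q ^ l with hB
  have key : brk q x j * ∑ l ∈ Finset.range (j + 1),
      ((-1 : LaurentSeries F) ^ l / Lfac q x l) * (1 / Dfac q x (j - l)) ^ q ^ l = 0 := by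
    rw [Finset.mul_sum]
    have hterm : ∀ l ∈ Finset.range (j + 1),
        brk q x j * (((-1 : LaurentSeries F) ^ l / Lfac q x l)
          * (1 / Dfac q x (j - l)) ^ q ^ l) = A l + B l := by
      intro l hl
      have hlj : l ≤ j := by
        have := Finset.mem_range.mp hl; omega
      have hsplit : brk q x j = ((xK F) ^ q ^ j - (xK F) ^ q ^ l) + brk q x l := by
        rw [brk, brk]; ring
      rw [hA, hB]
      simp only
      rw [mul_pow, brk_pow hq hlj, hsplit]
      ring
    rw [Finset.sum_congr rfl hterm, Finset.sum_add_distrib]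
    have hAj : A j = 0 := by
      have : brk q x (j - j) = 0 := by
        rw [Nat.sub_self, brk, pow_zero, pow_one, sub_self]
      rw [hA]; simp only
      rw [this, mul_zero, zero_pow (pow_ne_zero _ (by omega)), mul_zero]
    have hB0 : B 0 = 0 := by
      have : brk q x 0 = 0 := by rw [brk, pow_zero, pow_one, sub_self]
      rw [hB]; simp only
      rw [this, mul_zero, zero_mul]
    rw [Finset.sum_range_succ, hAj, add_zero, Finset.sum_range_succ', hB0, add_zero,
      ← Finset.sum_add_distrib]
    apply Finset.sum_eq_zero
    intro l hl
    have hlj : l < j := Finset.mem_range.mp hl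
    have hDx : Dfac q x (j - (l + 1)) ≠ 0 := Dfac_ne_zero_s17 hq2 _
    have hbr : brk q x ((j - (l + 1)) + 1) ≠ 0 := brk_ne_zero hq2 (by omega)
    have hAl : A l = ((-1) ^ l / Lfac q x l)
        * (1 / Dfac q x (j - (l + 1))) ^ q ^ (l + 1) := by
      have hsub : j - l = (j - (l + 1)) + 1 := by omega
      have hDrw : Dfac q x ((j - (l + 1)) + 1)
          = brk q x ((j - (l + 1)) + 1) * (Dfac q x (j - (l + 1))) ^ q := rfl
      have hkey : (1 / Dfac q x ((j - (l + 1)) + 1)) * brk q x ((j - (l + 1)) + 1)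
          = (1 / Dfac q x (j - (l + 1))) ^ q := by
        rw [hDrw]
        field_simp
        rw [← mul_pow, mul_one_div_cancel hDx, one_pow]
      rw [hA]; simp only
      rw [hsub, hkey, ← pow_mul, ← pow_succ']
    have hBl : B (l + 1) = -(((-1) ^ l / Lfac q x l)
        * (1 / Dfac q x (j - (l + 1))) ^ q ^ (l + 1)) := by
      have hL : Lfac q x l ≠ 0 := Lfac_ne_zero hq2 l
      have hbr2 : brk q x (l + 1) ≠ 0 := brk_ne_zero hq2 (by omega)
      have hLrw : Lfac q x (l + 1) = brk q x (l + 1) * Lfac q x l := rfl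
      have hc : ((-1 : LaurentSeries F) ^ (l + 1) / Lfac q x (l + 1)) * brk q x (l + 1)
          = -((-1) ^ l / Lfac q x l) := by
        rw [hLrw, div_mul_eq_mul_div,
          mul_comm ((-1 : LaurentSeries F) ^ (l + 1)) (brk q x (l + 1)),
          mul_div_mul_left _ _ hbr2, pow_succ]
        ring
      rw [hB]; simp only
      rw [hc]
      ring
    rw [hAl, hBl]
    ring
  exact (mul_eq_zero.mp key).resolve_left hbrkj

lemma range_succ_sum_split (M : Type*) [AddCommMonoid M] (f : ℕ → M) (j : ℕ) :
    ∑ l ∈ Finset.range (j + 1), f l = f 0 + ∑ l ∈ Finset.Icc 1 j, f l := by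
  induction j with
  | zero => simp
  | succ j ih =>
      rw [Finset.sum_range_succ, ih, Finset.sum_Icc_succ_top (by omega), add_assoc]

/-- Gekeler's identity in the form needed: `∑_{l=1}^{j} (-1)^{l+1} π_{j,l} / L_l = 1`. -/
lemma sum_eq_one {q : ℕ} (hq : q = Fintype.card F) {j : ℕ} (hj : 1 ≤ j) :
    ∑ l ∈ Finset.Icc 1 j,
      ((-1 : LaurentSeries F) ^ (l + 1) / Lfac q (xK F) l) * prD (F := F) q j l = 1 := by
  have hq2 : 2 ≤ q := by rw [hq]; exact Fintype.one_lt_card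
  set x := xK F with hx
  have hDj : Dfac q x j ≠ 0 := Dfac_ne_zero_s17 hq2 j
  have hsum0 := T_zero hq hj
  rw [range_succ_sum_split] at hsum0
  have hzero : ((-1 : LaurentSeries F) ^ 0 / Lfac q x 0) * (1 / Dfac q x (j - 0)) ^ q ^ 0
      = 1 / Dfac q x j := by
    simp [Lfac]
  rw [hzero] at hsum0
  have hS : ∑ l ∈ Finset.Icc 1 j,
      ((-1 : LaurentSeries F) ^ l / Lfac q x l) * (1 / Dfac q x (j - l)) ^ q ^ l
      = -(1 / Dfac q x j) := eq_neg_of_add_eq_zero_right hsum0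
  have hterm : ∀ l ∈ Finset.Icc 1 j,
      ((-1 : LaurentSeries F) ^ (l + 1) / Lfac q x l) * prD (F := F) q j l
        = (-Dfac q x j) * (((-1) ^ l / Lfac q x l) * (1 / Dfac q x (j - l)) ^ q ^ l) := by
    intro l hl
    obtain ⟨hl1, hlj⟩ := Finset.mem_Icc.mp hl
    have hD2 : (Dfac q x (j - l)) ^ q ^ l ≠ 0 := pow_ne_zero _ (Dfac_ne_zero_s17 hq2 _)
    have hprD : prD (F := F) q j l = Dfac q x j * (1 / Dfac q x (j - l)) ^ q ^ l := by
      rw [one_div, inv_pow, eq_mul_inv_iff_mul_eq₀ hD2]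
      exact prD_mul_Dfac hq hlj
    rw [hprD, pow_succ]
    ring
  rw [Finset.sum_congr rfl hterm, ← Finset.mul_sum, hS]
  have hfin : -Dfac q x j * -(1 / Dfac q x j) = Dfac q x j * (1 / Dfac q x j) := by ring
  rw [hfin, mul_one_div, div_self hDj]

lemma theta0_single_zero (q : ℕ) (c : LaurentSeries F) :
    theta0 q (Finsupp.single 0 c) = 0 := by
  rw [theta0]
  refine Eq.trans (Finsupp.sum_single_index ?_) ?_
  · ext i
    simp
  · rw [Finset.Icc_eq_empty (by omega), Finset.sum_empty, smul_zero]

lemma theta0_single {q : ℕ} (hq : q = Fintype.card F) {j : ℕ} (hj : 1 ≤ j)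
    (c : LaurentSeries F) :
    theta0 q (Finsupp.single j c) = Finsupp.single j c := by
  rw [theta0]
  refine Eq.trans (Finsupp.sum_single_index ?_) ?_
  · ext i
    simp
  have hterm : ∀ l ∈ Finset.Icc 1 j,
      ((-1 : LaurentSeries F) ^ (l + 1) / Lfac q (xK F) l)
          • DeltaIter q l (Finsupp.single j (1 : LaurentSeries F))
        = Finsupp.single j
            (((-1 : LaurentSeries F) ^ (l + 1) / Lfac q (xK F) l) * prD (F := F) q j l) := by
    intro l _
    rw [DeltaIter_single, Finsupp.smul_single, mul_one, smul_eq_mul]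
  rw [Finset.sum_congr rfl hterm, ← Finsupp.single_finset_sum, sum_eq_one hq hj,
    Finsupp.smul_single, smul_eq_mul, mul_one]

lemma theta0_sub (q : ℕ) (u v : ℕ →₀ LaurentSeries F) :
    theta0 q (u - v) = theta0 q u - theta0 q v := by
  rw [theta0, theta0, theta0]
  exact Finsupp.sum_sub_index (α := ℕ) (β := LaurentSeries F) (γ := ℕ →₀ LaurentSeries F)
    (f := u) (g := v)
    (h := fun j a => a • ∑ l ∈ Finset.Icc 1 j,
      ((-1 : LaurentSeries F) ^ (l + 1) / Lfac q (xK F) l) •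
        DeltaIter q l (Finsupp.single j (1 : LaurentSeries F)))
    (fun a b₁ b₂ => by
      show (b₁ - b₂) • _ = b₁ • _ - b₂ • _
      refine Finsupp.ext fun i => ?_
      simp only [Finsupp.smul_apply, Finsupp.sub_apply, smul_eq_mul]
      ring)

end Aux

/-- For the delta operator `θ = τ^{-1}θ₀` with `θ₀ = Σ_{l≥1} ((-1)^{l+1}/L_l) Δ^{(l)}`,
one has `θ₀(t^{q^j}) = t^{q^j}` for all `j ≥ 1`, and its basic sequence is `P_0(t) = t`,
`P_n(t) = D_n (t^{q^n} - t^{q^{n-1}})` for `n ≥ 1` (that is, `θ₀ P_0 = 0`,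
`θ₀ P_n = [n] P_{n-1}^q`, `P_0(1) = 1`, `P_n(1) = 0`). -/
theorem theta0_basic_sequence {F : Type*} [Field F] [Fintype F]
    (q : ℕ) (hq : q = Fintype.card F) :
    (∀ j, 1 ≤ j →
        theta0 q (Finsupp.single j (1 : LaurentSeries F))
          = Finsupp.single j (1 : LaurentSeries F))
    ∧ theta0 q (Pseq (F := F) q 0) = 0
    ∧ (∀ n, 1 ≤ n →
        theta0 q (Pseq (F := F) q n) = brk q (xK F) n • frob q (Pseq (F := F) q (n - 1)))
    ∧ eval1 (Pseq (F := F) q 0) = 1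
    ∧ (∀ n, 1 ≤ n → eval1 (Pseq (F := F) q n) = 0) := by
  have hq2 : 2 ≤ q := by rw [hq]; exact Fintype.one_lt_card
  set x := xK F with hx
  have hPn : ∀ n : ℕ, 1 ≤ n → Pseq (F := F) q n
      = Finsupp.single n (Dfac q x n) - Finsupp.single (n - 1) (Dfac q x n) := by
    intro n hn
    rw [Pseq, if_neg (by omega)]
    ext a : 1
    simp only [Finsupp.smul_apply, Finsupp.sub_apply, Finsupp.single_apply, smul_eq_mul]
    split_ifs <;> ring
  refine ⟨fun j hj => theta0_single hq hj 1, ?_, ?_, ?_, ?_⟩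
  · rw [Pseq, if_pos rfl]
    exact theta0_single_zero q 1
  · intro n hn
    rw [hPn n hn, theta0_sub]
    have hfrob_single : ∀ (k : ℕ) (c : LaurentSeries F),
        frob q (Finsupp.single k c) = Finsupp.single (k + 1) (c ^ q) := by
      intro k c
      rw [frob, Finsupp.sum_single_index]
      rw [zero_pow (by omega), Finsupp.single_zero]
    rcases Nat.lt_or_ge n 2 with h2 | h2
    · -- n = 1
      have hn1 : n = 1 := by omega
      subst hn1
      rw [theta0_single hq le_rfl, theta0_single_zero]
      show Finsupp.single 1 (Dfac q x 1) - 0 = brk q x 1 • frob q (Pseq (F := F) q 0)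
      rw [Pseq, if_pos rfl, hfrob_single, one_pow]
      ext a
      simp only [Finsupp.sub_apply, Finsupp.coe_zero, Pi.zero_apply, Finsupp.smul_apply,
        Finsupp.single_apply, smul_eq_mul, Dfac, one_pow, mul_one]
      split_ifs <;> simp
    · -- n ≥ 2
      obtain ⟨m, rfl⟩ : ∃ m, n = m + 1 := ⟨n - 1, by omega⟩
      have hm : 1 ≤ m := by omega
      rw [theta0_single hq (by omega), Nat.add_sub_cancel,
        theta0_single hq (by omega : 1 ≤ m)]
      rw [hPn m hm]
      have hfrob_sub : ∀ u v : ℕ →₀ LaurentSeries F, frob q (u - v) = frob q u - frob q v := by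
        intro u v
        rw [frob, frob, frob]
        exact Finsupp.sum_sub_index (α := ℕ) (β := LaurentSeries F)
          (γ := ℕ →₀ LaurentSeries F) (f := u) (g := v)
          (h := fun k a => Finsupp.single (k + 1) (a ^ q))
          (fun a b₁ b₂ => by
            show Finsupp.single (a + 1) ((b₁ - b₂) ^ q)
              = Finsupp.single (a + 1) (b₁ ^ q) - Finsupp.single (a + 1) (b₂ ^ q)
            have h1 := qpow_sub hq b₁ b₂ 1
            rw [pow_one] at h1
            rw [h1, Finsupp.single_sub])
      rw [hfrob_sub, hfrob_single, hfrob_single, Nat.sub_add_cancel hm]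
      have hDrw : Dfac q x (m + 1) = brk q x (m + 1) * (Dfac q x m) ^ q := rfl
      rw [hDrw]
      ext a
      simp only [Finsupp.sub_apply, Finsupp.smul_apply, Finsupp.single_apply, smul_eq_mul]
      split_ifs <;> ring
  · rw [Pseq, if_pos rfl, eval1, Finsupp.sum_single_index rfl]
  · intro n hn
    rw [hPn n hn, eval1]
    have hsub : (Finsupp.single n (Dfac q x n)
          - Finsupp.single (n - 1) (Dfac q x n) : ℕ →₀ LaurentSeries F).sum
          (fun _ a => a)
        = (Finsupp.single n (Dfac q x n) : ℕ →₀ LaurentSeries F).sum (fun _ a => a)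
          - (Finsupp.single (n - 1) (Dfac q x n) : ℕ →₀ LaurentSeries F).sum
            (fun _ a => a) := by
      exact Finsupp.sum_sub_index (α := ℕ) (β := LaurentSeries F) (γ := LaurentSeries F)
        (h := fun _ a => a) (fun a b₁ b₂ => rfl)
    rw [hsub, Finsupp.sum_single_index rfl, Finsupp.sum_single_index rfl, sub_self]
end
end
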